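/- Let V be a finite-dimensional real vector space and let P₁, P₂ be d-dimensional subspaces of Q = S²V* consisting of mixed pencils (i.e. containing no nonzero positive semidefinite quadric). The following are equivalent: (i) the sets P(P₁° ∩ S²V^{≥0}) and P(P₂° ∩ S²V^{≥0}) are disjoint; (ii) there exist q₁ ∈ P₁ and q₂ ∈ P₂ such that q₂ − q₁ is positive definite; (iii) there exist q₁ ∈ P₁ and q₂ ∈ P₂ with {q₁ ≥ 0} ⊆ {q₂ > 0} in P(V). -/

import Mathlib

open Matrix

namespace FittingAux

variable {n m : ℕ}
lemma diag_conj (U A : Matrix (Fin n) (Fin n) ℝ) (i : Fin n) :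
    (Uᵀ * A * U) i i = (fun k => U k i) ⬝ᵥ (A *ᵥ fun k => U k i) := by
  simp only [mul_apply, transpose_apply, dotProduct, mulVec, Finset.sum_mul, Finset.mul_sum]
  rw [Finset.sum_comm]
  exact Finset.sum_congr rfl fun k _ => Finset.sum_congr rfl fun j _ => by ring

lemma quad_two (A : Matrix (Fin n) (Fin n) ℝ) (i j : Fin n) (a b : ℝ) :
    (Pi.single i a + Pi.single j b) ⬝ᵥ (A *ᵥ (Pi.single i a + Pi.single j b)) =
      a * (A i i * a) + a * (A i j * b) + (b * (A j i * a) + b * (A j j * b)) := by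
  simp [Matrix.mulVec_add, Matrix.mulVec_single, dotProduct_add, add_dotProduct,
    single_dotProduct]
  ring

lemma dot_two {i j : Fin n} (hij : i ≠ j) (a b : ℝ) :
    (Pi.single i a + Pi.single j b) ⬝ᵥ (Pi.single i a + Pi.single j b) = a * a + b * b := by
  simp [dotProduct_add, add_dotProduct, single_dotProduct, Pi.single_apply,
    hij, hij.symm]

lemma exists_isotropic (A : Matrix (Fin (n+1)) (Fin (n+1)) ℝ) (htr : A.trace = 0) :
    ∃ x : Fin (n+1) → ℝ, x ⬝ᵥ x = 1 ∧ x ⬝ᵥ (A *ᵥ x) = 0 := by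
  have hsum : ∑ i, A i i = 0 := htr
  have hne : (Finset.univ : Finset (Fin (n+1))).Nonempty := Finset.univ_nonempty
  obtain ⟨i, hi⟩ : ∃ i, 0 ≤ A i i := by
    by_contra h
    push_neg at h
    have : ∑ i, A i i < 0 := Finset.sum_neg (fun i _ => h i) hne
    linarith
  obtain ⟨j, hj⟩ : ∃ j, A j j ≤ 0 := by
    by_contra h
    push_neg at h
    have : 0 < ∑ i, A i i := Finset.sum_pos (fun i _ => h i) hne
    linarith
  by_cases hij : i = j
  · subst hij
    have hAii : A i i = 0 := le_antisymm hj hi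
    refine ⟨Pi.single i 1, by simp [single_dotProduct, Pi.single_apply], ?_⟩
    simp [Matrix.mulVec_single, single_dotProduct, hAii]
  · set g : ℝ → (Fin (n+1) → ℝ) :=
      fun t => Pi.single i (Real.sqrt (1-t)) + Pi.single j (Real.sqrt t) with hgdef
    have hgcont : Continuous g := by
      apply continuous_pi
      intro k
      simp only [hgdef, Pi.add_apply, Pi.single_apply]
      apply Continuous.add
      · split_ifs
        · exact Real.continuous_sqrt.comp (continuous_const.sub continuous_id)
        · exact continuous_const
      · split_ifs
        · exact Real.continuous_sqrt
        · exact continuous_const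
    have hfc : Continuous fun t => (g t) ⬝ᵥ (A *ᵥ (g t)) :=
      hgcont.dotProduct (continuous_const.matrix_mulVec hgcont)
    have hf0 : (g 0) ⬝ᵥ (A *ᵥ (g 0)) = A i i := by
      simp only [hgdef, sub_zero, Real.sqrt_one, Real.sqrt_zero]
      rw [quad_two]
      ring
    have hf1 : (g 1) ⬝ᵥ (A *ᵥ (g 1)) = A j j := by
      simp only [hgdef, sub_self, Real.sqrt_one, Real.sqrt_zero]
      rw [quad_two]
      ring
    have hmem : (0:ℝ) ∈ Set.Icc ((g 1) ⬝ᵥ (A *ᵥ (g 1))) ((g 0) ⬝ᵥ (A *ᵥ (g 0))) := by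
      rw [hf0, hf1]; exact ⟨hj, hi⟩
    obtain ⟨t, ht, hft⟩ :=
      intermediate_value_Icc' (by norm_num : (0:ℝ) ≤ 1) hfc.continuousOn hmem
    refine ⟨g t, ?_, hft⟩
    rw [hgdef]
    rw [dot_two hij, Real.mul_self_sqrt (by linarith [ht.2]), Real.mul_self_sqrt ht.1]
    ring
lemma exists_orthogonal_firstcol (x : Fin (n+1) → ℝ) (hx : x ⬝ᵥ x = 1) :
    ∃ V : Matrix (Fin (n+1)) (Fin (n+1)) ℝ, Vᵀ * V = 1 ∧ ∀ k, V k 0 = x k := by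
  let x' : EuclideanSpace ℝ (Fin (n+1)) := WithLp.toLp 2 x
  have hON : Orthonormal ℝ (Set.restrict {(0 : Fin (n+1))} (fun _ : Fin (n+1) => x')) := by
    rw [orthonormal_iff_ite]
    rintro ⟨a, ha⟩ ⟨b, hb⟩
    simp only [Set.mem_singleton_iff] at ha hb
    subst ha; subst hb
    simp only [Set.restrict_apply, if_pos rfl]
    have : (inner ℝ x' x' : ℝ) = x ⬝ᵥ x := by
      simp only [x', PiLp.inner_apply, WithLp.ofLp_toLp, dotProduct, RCLike.inner_apply, conj_trivial,
        mul_comm]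
    show inner ℝ x' x' = _
    rw [this, hx]
    simp
  obtain ⟨b, hb⟩ := hON.exists_orthonormalBasis_extension_of_card_eq
    (by simp) 
  refine ⟨Matrix.of (fun k i => b i k), ?_, ?_⟩
  · ext i j
    have h := orthonormal_iff_ite.mp b.orthonormal i j
    rw [PiLp.inner_apply] at h
    simp only [RCLike.inner_apply, conj_trivial] at h
    simp only [Matrix.mul_apply, Matrix.transpose_apply, Matrix.of_apply, Matrix.one_apply]
    rw [← h]
    exact Finset.sum_congr rfl fun _ _ => mul_comm _ _
  · intro k
    have := hb 0 rfl
    simp only [Matrix.of_apply]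
    simp [this, x']

lemma exists_conj_zero_diag :
    ∀ (n : ℕ) (A : Matrix (Fin n) (Fin n) ℝ), Aᵀ = A → A.trace = 0 →
    ∃ U : Matrix (Fin n) (Fin n) ℝ, Uᵀ * U = 1 ∧ ∀ i, (Uᵀ * A * U) i i = 0 := by
  intro n
  induction n with
  | zero => exact fun A _ _ => ⟨1, by simp, fun i => i.elim0⟩
  | succ n IH =>
    intro A hA htr
    obtain ⟨x, hx1, hx0⟩ := exists_isotropic A htr
    obtain ⟨V, hV, hVcol⟩ := exists_orthogonal_firstcol x hx1
    have hVV' : V * Vᵀ = 1 := mul_eq_one_comm.mp hV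
    set B := Vᵀ * A * V with hBdef
    have hBsym : Bᵀ = B := by
      simp [hBdef, Matrix.transpose_mul, Matrix.transpose_transpose, hA, Matrix.mul_assoc]
    have hB00 : B 0 0 = 0 := by
      have hcol : (fun k => V k 0) = x := funext hVcol
      rw [hBdef, diag_conj, hcol]
      exact hx0
    have hBtr : B.trace = 0 := by
      rw [hBdef, Matrix.trace_mul_comm, ← Matrix.mul_assoc, hVV', Matrix.one_mul]
      exact htr
    set B' : Matrix (Fin n) (Fin n) ℝ := Matrix.of (fun i j => B i.succ j.succ) with hB'def
    have hB'sym : B'ᵀ = B' := by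
      ext i j
      have := congrFun (congrFun hBsym j.succ) i.succ
      simpa [hB'def, Matrix.transpose_apply] using this.symm
    have hB'tr : B'.trace = 0 := by
      have h1 : B.trace = B 0 0 + ∑ i : Fin n, B i.succ i.succ := by
        simp [Matrix.trace, Matrix.diag, Fin.sum_univ_succ]
      have h2 : B'.trace = ∑ i : Fin n, B i.succ i.succ := by
        simp [Matrix.trace, Matrix.diag, hB'def]
      rw [h2]
      rw [hBtr, hB00] at h1
      linarith
    obtain ⟨W, hW, hWd⟩ := IH B' hB'sym hB'tr
    set Wp : Matrix (Fin (n+1)) (Fin (n+1)) ℝ :=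
      Matrix.of (Fin.cons (Fin.cons 1 0) (fun k' => Fin.cons 0 (fun l' => W k' l'))) with hWpdef
    have e00 : Wp 0 0 = 1 := rfl
    have e0s : ∀ l : Fin n, Wp 0 l.succ = 0 := by
      intro l; simp [hWpdef]
    have es0 : ∀ k : Fin n, Wp k.succ 0 = 0 := by
      intro k; simp [hWpdef]
    have ess : ∀ k l : Fin n, Wp k.succ l.succ = W k l := by
      intro k l; simp [hWpdef]
    have hWp : Wpᵀ * Wp = 1 := by
      ext k l
      rw [Matrix.mul_apply, Fin.sum_univ_succ]
      induction k using Fin.cases with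
      | zero =>
        induction l using Fin.cases with
        | zero => simp [Matrix.transpose_apply, e00, es0]
        | succ l =>
          simp [Matrix.transpose_apply, e00, e0s, es0, Matrix.one_apply,
            (Fin.succ_ne_zero l).symm]
      | succ k =>
        induction l using Fin.cases with
        | zero => simp [Matrix.transpose_apply, e0s, es0, Matrix.one_apply, Fin.succ_ne_zero]
        | succ l =>
          have h := congrFun (congrFun hW k) l
          rw [Matrix.mul_apply] at h
          simp only [Matrix.transpose_apply] at h ⊢
          simp only [e0s, ess, zero_mul, zero_add]
          rw [h]
          simp [Matrix.one_apply, Fin.succ_inj]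
    refine ⟨V * Wp, ?_, ?_⟩
    · rw [Matrix.transpose_mul, Matrix.mul_assoc, ← Matrix.mul_assoc Vᵀ V Wp, hV,
        Matrix.one_mul, hWp]
    · intro i
      have hUAU : (V * Wp)ᵀ * A * (V * Wp) = Wpᵀ * B * Wp := by
        simp [hBdef, Matrix.transpose_mul, Matrix.mul_assoc]
      rw [hUAU]
      induction i using Fin.cases with
      | zero =>
        rw [Matrix.mul_apply, Fin.sum_univ_succ]
        simp only [es0, mul_zero, Finset.sum_const_zero, add_zero]
        rw [Matrix.mul_apply, Fin.sum_univ_succ]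
        simp [Matrix.transpose_apply, e00, es0, hB00]
      | succ i =>
        have key : (Wpᵀ * B * Wp) i.succ i.succ = (Wᵀ * B' * W) i i := by
          conv_lhs => rw [Matrix.mul_apply]
          conv_rhs => rw [Matrix.mul_apply]
          rw [Fin.sum_univ_succ]
          simp only [e0s, mul_zero, zero_add]
          refine Finset.sum_congr rfl fun l _ => ?_
          rw [ess]
          congr 1
          conv_lhs => rw [Matrix.mul_apply]
          conv_rhs => rw [Matrix.mul_apply]
          rw [Fin.sum_univ_succ]
          simp [Matrix.transpose_apply, es0, ess, hB'def]
          exact Or.inl (e0s i)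
        rw [key]
        exact hWd i
lemma isOpen_posQuad (m : ℕ) :
    IsOpen {A : Matrix (Fin m) (Fin m) ℝ | ∀ v : Fin m → ℝ, v ≠ 0 → 0 < v ⬝ᵥ (A *ᵥ v)} := by
  rcases Nat.eq_zero_or_pos m with hm | hm
  · subst hm
    have : {A : Matrix (Fin 0) (Fin 0) ℝ | ∀ v : Fin 0 → ℝ, v ≠ 0 → 0 < v ⬝ᵥ (A *ᵥ v)}
        = Set.univ :=
      Set.eq_univ_of_forall fun A v hv => absurd (Subsingleton.elim v 0) hv
    rw [this]
    exact isOpen_univ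
  · rw [isOpen_iff_forall_mem_open]
    intro A hA
    haveI : Nonempty (Fin m) := ⟨⟨0, hm⟩⟩
    have hsph : IsCompact (Metric.sphere (0 : Fin m → ℝ) 1) := isCompact_sphere 0 1
    have hsne : (Metric.sphere (0 : Fin m → ℝ) 1).Nonempty := by
      refine ⟨fun _ => 1, ?_⟩
      simp [Metric.mem_sphere, dist_zero_right]
    have hcont : Continuous fun v : Fin m → ℝ => v ⬝ᵥ (A *ᵥ v) :=
      continuous_id.dotProduct (continuous_const.matrix_mulVec continuous_id)
    obtain ⟨v₀, hv₀s, hv₀min⟩ := hsph.exists_isMinOn hsne hcont.continuousOn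
    set ε := v₀ ⬝ᵥ (A *ᵥ v₀) with hε
    have hv₀ne : v₀ ≠ 0 := by
      have : ‖v₀‖ = 1 := by simpa [dist_zero_right] using hv₀s
      intro h
      rw [h] at this
      simp at this
    have hεpos : 0 < ε := hA v₀ hv₀ne
    set δ := ε / ((m:ℝ)^2 + 1) with hδ
    have hδpos : 0 < δ := by positivity
    refine ⟨{A' | ∀ i j, |A' i j - A i j| < δ}, ?_, ?_, fun i j => by simpa using hδpos⟩
    · intro A' hA' v hv
      have hc : (0:ℝ) < ‖v‖ := norm_pos_iff.mpr hv
      set w := ‖v‖⁻¹ • v with hw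
      have hwnorm : ‖w‖ = 1 := by
        rw [hw, norm_smul, norm_inv, norm_norm]
        field_simp
      have hws : w ∈ Metric.sphere (0 : Fin m → ℝ) 1 := by
        simp [Metric.mem_sphere, dist_zero_right, hwnorm]
      have h1 : ε ≤ w ⬝ᵥ (A *ᵥ w) := hv₀min hws
      have hwb : ∀ i, |w i| ≤ 1 := by
        intro i
        have := norm_le_pi_norm w i
        rwa [hwnorm, Real.norm_eq_abs] at this
      have hrw : w ⬝ᵥ ((A' - A) *ᵥ w) = ∑ i, w i * ∑ j, (A' - A) i j * w j := by
        simp [Matrix.mulVec, dotProduct]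
      have h2 : |w ⬝ᵥ ((A' - A) *ᵥ w)| ≤ (m:ℝ)^2 * δ := by
        rw [hrw]
        calc |∑ i, w i * ∑ j, (A' - A) i j * w j|
            ≤ ∑ i, |w i * ∑ j, (A' - A) i j * w j| := Finset.abs_sum_le_sum_abs _ _
          _ ≤ ∑ _i : Fin m, ∑ _j : Fin m, δ := by
              refine Finset.sum_le_sum fun i _ => ?_
              rw [abs_mul]
              have hinner : |∑ j, (A' - A) i j * w j| ≤ ∑ _j : Fin m, δ := by
                calc |∑ j, (A' - A) i j * w j| ≤ ∑ j, |(A' - A) i j * w j| :=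
                      Finset.abs_sum_le_sum_abs _ _
                  _ ≤ ∑ _j : Fin m, δ := by
                      refine Finset.sum_le_sum fun j _ => ?_
                      rw [abs_mul, Matrix.sub_apply]
                      calc |A' i j - A i j| * |w j| ≤ δ * 1 := by
                            apply mul_le_mul (le_of_lt (hA' i j)) (hwb j) (abs_nonneg _)
                              (le_of_lt hδpos)
                        _ = δ := mul_one δ
              calc |w i| * |∑ j, (A' - A) i j * w j| ≤ 1 * (∑ _j : Fin m, δ) := by
                    apply mul_le_mul (hwb i) hinner (abs_nonneg _) zero_le_one
                _ = ∑ _j : Fin m, δ := one_mul _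
          _ = (m:ℝ)^2 * δ := by
              simp [Finset.sum_const]
              ring
      have hquadw : 0 < w ⬝ᵥ (A' *ᵥ w) := by
        have hsplit : w ⬝ᵥ (A' *ᵥ w) = w ⬝ᵥ (A *ᵥ w) + w ⬝ᵥ ((A' - A) *ᵥ w) := by
          rw [Matrix.sub_mulVec, dotProduct_sub]
          ring
        have hlt : (m:ℝ)^2 * δ < ε := by
          rw [hδ]
          rw [div_eq_iff (by positivity : ((m:ℝ)^2 + 1) ≠ 0)] at *
          nlinarith [hεpos]
        have := abs_le.mp h2
        rw [hsplit]
        linarith [this.1]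
      have hvw : v = ‖v‖ • w := by
        rw [hw, smul_inv_smul₀ (ne_of_gt hc)]
      rw [hvw, Matrix.mulVec_smul, smul_dotProduct, dotProduct_smul]
      simp only [smul_eq_mul]
      positivity
    · have : {A' : Matrix (Fin m) (Fin m) ℝ | ∀ i j, |A' i j - A i j| < δ}
          = ⋂ i, ⋂ j, {A' : Matrix (Fin m) (Fin m) ℝ | |A' i j - A i j| < δ} := by
        ext A'
        simp [Set.mem_iInter]
      rw [this]
      refine isOpen_iInter_of_finite fun i => isOpen_iInter_of_finite fun j => ?_
      exact isOpen_lt (((continuous_id.matrix_elem i j).sub continuous_const).abs)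
        continuous_const
lemma dotProduct_self_pos' {v : Fin m → ℝ} (hv : v ≠ 0) : 0 < v ⬝ᵥ v := by
  have h₁ : 0 ≤ v ⬝ᵥ v := Finset.sum_nonneg fun i _ => mul_self_nonneg _
  exact lt_of_le_of_ne h₁ fun h => hv (dotProduct_self_eq_zero.mp h.symm)

lemma quad_vecMulVec (x y : Fin m → ℝ) :
    y ⬝ᵥ ((vecMulVec x x) *ᵥ y) = (x ⬝ᵥ y) * (x ⬝ᵥ y) := by
  simp only [Matrix.vecMulVec_apply, Matrix.mulVec, dotProduct]
  rw [Finset.sum_mul]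
  refine Finset.sum_congr rfl fun i _ => ?_
  rw [Finset.mul_sum, Finset.mul_sum]
  refine Finset.sum_congr rfl fun j _ => by ring

lemma trace_vecMulVec_mul (x : Fin m → ℝ) (M : Matrix (Fin m) (Fin m) ℝ) :
    (vecMulVec x x * M).trace = x ⬝ᵥ (M *ᵥ x) := by
  simp only [Matrix.trace, Matrix.diag, Matrix.mul_apply, Matrix.vecMulVec_apply,
    Matrix.mulVec, dotProduct, Finset.mul_sum]
  rw [Finset.sum_comm]
  refine Finset.sum_congr rfl fun i _ => Finset.sum_congr rfl fun j _ => by ring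

lemma vecMulVec_self_transpose (x : Fin m → ℝ) : (vecMulVec x x)ᵀ = vecMulVec x x := by
  ext i j
  simp [Matrix.vecMulVec_apply, Matrix.transpose_apply, mul_comm]

lemma convex_posQuad (m : ℕ) :
    Convex ℝ {A : Matrix (Fin m) (Fin m) ℝ | ∀ v : Fin m → ℝ, v ≠ 0 → 0 < v ⬝ᵥ (A *ᵥ v)} := by
  intro A hA B hB a b ha hb hab
  intro v hv
  have hqa := hA v hv
  have hqb := hB v hv
  have hexp : v ⬝ᵥ ((a • A + b • B) *ᵥ v)
      = a * (v ⬝ᵥ (A *ᵥ v)) + b * (v ⬝ᵥ (B *ᵥ v)) := by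
    rw [Matrix.add_mulVec, dotProduct_add, Matrix.smul_mulVec,
      Matrix.smul_mulVec, dotProduct_smul, dotProduct_smul]
    simp [smul_eq_mul]
  rw [hexp]
  rcases eq_or_lt_of_le ha with h | h
  · have hb1 : b = 1 := by linarith
    rw [← h, hb1]
    simpa using hqb
  · nlinarith

end FittingAux

open FittingAux

/-- For two mixed pencils `P₁, P₂` of dimension `d` in the space of
quadrics `Q = S²V*` (modelled as symmetric matrices, with the trace pairing), the
following are equivalent: (i) the projectivized sets `P(Pᵢ° ∩ S²V^{≥0})` are
disjoint, i.e. there is no nonzero PSD tensor in both annihilators; (ii) there are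
`q₁ ∈ P₁`, `q₂ ∈ P₂` with `q₂ - q₁` positive definite; (iii) there are `q₁ ∈ P₁`,
`q₂ ∈ P₂` with `{q₁ ≥ 0} ⊆ {q₂ > 0}` in `P(V)`. -/
theorem fitting_pair_tfae (m d : ℕ)
    (P₁ P₂ : Submodule ℝ (Matrix (Fin m) (Fin m) ℝ))
    (hsym₁ : ∀ q ∈ P₁, q.IsSymm) (hsym₂ : ∀ q ∈ P₂, q.IsSymm)
    (hd₁ : Module.finrank ℝ P₁ = d) (hd₂ : Module.finrank ℝ P₂ = d)
    (hmix₁ : ∀ q ∈ P₁, q.PosSemidef → q = 0)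
    (hmix₂ : ∀ q ∈ P₂, q.PosSemidef → q = 0) :
    List.TFAE [
      ¬ ∃ p : Matrix (Fin m) (Fin m) ℝ, p ≠ 0 ∧ p.PosSemidef ∧
        (∀ q ∈ P₁, (q * p).trace = 0) ∧ (∀ q ∈ P₂, (q * p).trace = 0),
      ∃ q₁ ∈ P₁, ∃ q₂ ∈ P₂, (q₂ - q₁).PosDef,
      ∃ q₁ ∈ P₁, ∃ q₂ ∈ P₂, ∀ v : Fin m → ℝ, v ≠ 0 →
        0 ≤ v ⬝ᵥ (q₁ *ᵥ v) → 0 < v ⬝ᵥ (q₂ *ᵥ v)] := by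
  tfae_have 1 → 2 := by
    intro h1
    by_contra h2
    push_neg at h2
    apply h1
    set O := {A : Matrix (Fin m) (Fin m) ℝ | ∀ v : Fin m → ℝ, v ≠ 0 → 0 < v ⬝ᵥ (A *ᵥ v)}
      with hO
    set Wsp := P₁ ⊔ P₂ with hWsp
    have hdisj : Disjoint O (Wsp : Set (Matrix (Fin m) (Fin m) ℝ)) := by
      rw [Set.disjoint_left]
      intro A hAO hAW
      obtain ⟨a, ha, b, hb, rfl⟩ := Submodule.mem_sup.mp hAW
      refine h2 (-a) (P₁.neg_mem ha) b hb ?_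
      have heq : b - -a = a + b := by rw [sub_neg_eq_add, add_comm]
      rw [heq]
      refine posDef_iff_dotProduct_mulVec.mpr ⟨?_, ?_⟩
      · rw [Matrix.IsHermitian, conjTranspose_eq_transpose_of_trivial, Matrix.transpose_add,
          hsym₁ a ha, hsym₂ b hb]
      · intro v hv
        simpa using hAO v hv
    obtain ⟨f, u, hfO, hfW⟩ :=
      geometric_hahn_banach_open (convex_posQuad m) (isOpen_posQuad m) Wsp.convex hdisj
    have hf0 : ∀ q ∈ Wsp, f q = 0 := by
      intro q hq
      by_contra hne
      have hmem : ((u - 1) / f q) • q ∈ Wsp := Wsp.smul_mem _ hq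
      have hle := hfW _ hmem
      rw [f.map_smul, smul_eq_mul, div_mul_cancel₀ _ hne] at hle
      linarith
    have hu0 : u ≤ 0 := by
      have := hfW 0 Wsp.zero_mem
      simpa using this
    have h1O : (1 : Matrix (Fin m) (Fin m) ℝ) ∈ O := by
      intro v hv
      rw [Matrix.one_mulVec]
      exact dotProduct_self_pos' hv
    have hf1 : f 1 < 0 := lt_of_lt_of_le (hfO 1 h1O) hu0
    have hxx : ∀ x : Fin m → ℝ, f (vecMulVec x x) ≤ 0 := by
      intro x
      have key : ∀ ε : ℝ, 0 < ε → f (vecMulVec x x) < ε * (-f 1) := by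
        intro ε hε
        have hmemO : vecMulVec x x + ε • 1 ∈ O := by
          intro v hv
          rw [Matrix.add_mulVec, dotProduct_add, Matrix.smul_mulVec,
            Matrix.one_mulVec, dotProduct_smul]
          have h₁ : 0 ≤ v ⬝ᵥ (vecMulVec x x *ᵥ v) := by
            rw [quad_vecMulVec]
            exact mul_self_nonneg _
          have h₂ : 0 < v ⬝ᵥ v := dotProduct_self_pos' hv
          have : (0:ℝ) < ε * (v ⬝ᵥ v) := mul_pos hε h₂
          simp only [smul_eq_mul]
          linarith
        have hlt := hfO _ hmemO
        rw [map_add, f.map_smul, smul_eq_mul] at hlt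
        linarith
      by_contra hpos
      push_neg at hpos
      have hc : 0 < -f 1 := by linarith
      have hk := key (f (vecMulVec x x) / (2 * (-f 1))) (by positivity)
      have heq : f (vecMulVec x x) / (2 * (-f 1)) * (-f 1) = f (vecMulVec x x) / 2 := by
        rw [div_mul_eq_mul_div, mul_div_mul_right _ _ (ne_of_gt hc)]
      rw [heq] at hk
      linarith
    set p : Matrix (Fin m) (Fin m) ℝ := Matrix.of (fun i j => f (Matrix.single j i 1)) with hp
    have hrep : ∀ A : Matrix (Fin m) (Fin m) ℝ, (A * p).trace = f A := by
      intro A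
      calc (A * p).trace = ∑ i, ∑ j, A i j * f (Matrix.single i j 1) := by
            simp [Matrix.trace, Matrix.diag, Matrix.mul_apply, hp]
        _ = f A := by
            conv_rhs => rw [matrix_eq_sum_single A]
            rw [map_sum]
            refine Finset.sum_congr rfl fun i _ => ?_
            rw [map_sum]
            refine Finset.sum_congr rfl fun j _ => ?_
            rw [show Matrix.single i j (A i j) = A i j • Matrix.single i j (1:ℝ) by
              rw [smul_single, smul_eq_mul, mul_one]]
            rw [f.map_smul, smul_eq_mul]
    set p' : Matrix (Fin m) (Fin m) ℝ := (-(1:ℝ)/2) • (p + pᵀ) with hp'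
    have hptrace : ∀ q : Matrix (Fin m) (Fin m) ℝ, qᵀ = q → (q * p').trace = -f q := by
      intro q hq
      have h₁ : (q * pᵀ).trace = (q * p).trace := by
        calc (q * pᵀ).trace = ((q * pᵀ)ᵀ).trace := (Matrix.trace_transpose _).symm
          _ = (p * qᵀ).trace := by rw [Matrix.transpose_mul, Matrix.transpose_transpose]
          _ = (q * p).trace := by rw [hq, Matrix.trace_mul_comm]
      rw [hp', Matrix.mul_smul, Matrix.trace_smul, Matrix.mul_add, Matrix.trace_add, h₁, hrep]
      simp
      ring
    refine ⟨p', ?_, posSemidef_iff_dotProduct_mulVec.mpr ⟨?_, ?_⟩, ?_, ?_⟩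
    · intro h0
      have h1tr := hptrace 1 Matrix.transpose_one
      rw [h0, Matrix.mul_zero, Matrix.trace_zero] at h1tr
      linarith
    · rw [Matrix.IsHermitian, conjTranspose_eq_transpose_of_trivial, hp', Matrix.transpose_smul,
        Matrix.transpose_add, Matrix.transpose_transpose, add_comm]
    · intro x
      have hstar : star x = x := star_trivial x
      rw [hstar]
      have hq : x ⬝ᵥ (p' *ᵥ x) = (vecMulVec x x * p').trace :=
        (trace_vecMulVec_mul _ _).symm
      rw [hq, hptrace _ (vecMulVec_self_transpose _)]
      linarith [hxx x]
    · intro q hq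
      rw [hptrace q (hsym₁ q hq), hf0 q (Submodule.mem_sup_left hq), neg_zero]
    · intro q hq
      rw [hptrace q (hsym₂ q hq), hf0 q (Submodule.mem_sup_right hq), neg_zero]
  tfae_have 2 → 3 := by
    rintro ⟨q₁, h₁, q₂, h₂, hpd⟩
    refine ⟨q₁, h₁, q₂, h₂, fun v hv hq₁ => ?_⟩
    have hpos := (posDef_iff_dotProduct_mulVec.mp hpd).2 hv
    rw [star_trivial, Matrix.sub_mulVec, dotProduct_sub] at hpos
    linarith
  tfae_have 3 → 1 := by
    rintro ⟨q₁, hq₁, q₂, hq₂, himp⟩ ⟨p, hpne, hpsd, hann₁, hann₂⟩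
    set B := (open scoped MatrixOrder in CFC.sqrt p) with hBdef
    have hBB : B * B = p := by
      open scoped MatrixOrder in exact CFC.sqrt_mul_sqrt_self p hpsd.nonneg
    have hBherm : Bᵀ = B := by
      have h := (open scoped MatrixOrder in (CFC.sqrt_nonneg p).posSemidef).1
      rwa [Matrix.IsHermitian, conjTranspose_eq_transpose_of_trivial] at h
    have hq₁symm : q₁ᵀ = q₁ := hsym₁ q₁ hq₁
    have hq₂symm : q₂ᵀ = q₂ := hsym₂ q₂ hq₂
    have htr₁ : (B * q₁ * B).trace = 0 := by
      calc (B * q₁ * B).trace = (B * (B * q₁)).trace := Matrix.trace_mul_comm _ _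
        _ = (p * q₁).trace := by rw [← Matrix.mul_assoc, hBB]
        _ = (q₁ * p).trace := Matrix.trace_mul_comm _ _
        _ = 0 := hann₁ q₁ hq₁
    have htr₂ : (B * q₂ * B).trace = 0 := by
      calc (B * q₂ * B).trace = (B * (B * q₂)).trace := Matrix.trace_mul_comm _ _
        _ = (p * q₂).trace := by rw [← Matrix.mul_assoc, hBB]
        _ = (q₂ * p).trace := Matrix.trace_mul_comm _ _
        _ = 0 := hann₂ q₂ hq₂
    have hsym' : (B * q₁ * B)ᵀ = B * q₁ * B := by
      simp [Matrix.transpose_mul, hBherm, hq₁symm, Matrix.mul_assoc]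
    obtain ⟨U, hU, hUd⟩ := exists_conj_zero_diag m (B * q₁ * B) hsym' htr₁
    have hUU' : U * Uᵀ = 1 := mul_eq_one_comm.mp hU
    set c : Fin m → (Fin m → ℝ) := fun i k => U k i with hc
    have hcol : ∀ (M : Matrix (Fin m) (Fin m) ℝ) i, (Uᵀ * M * U) i i = (c i) ⬝ᵥ (M *ᵥ c i) :=
      fun M i => diag_conj U M i
    have hconj : ∀ (q : Matrix (Fin m) (Fin m) ℝ), qᵀ = q → ∀ i,
        (c i) ⬝ᵥ ((B * q * B) *ᵥ c i) = (B *ᵥ c i) ⬝ᵥ (q *ᵥ (B *ᵥ c i)) := by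
      intro q hqs i
      rw [← Matrix.mulVec_mulVec, ← Matrix.mulVec_mulVec, Matrix.dotProduct_mulVec]
      congr 1
      rw [← Matrix.vecMul_transpose, hBherm]
    have hz : ∀ i, (B *ᵥ c i) ⬝ᵥ (q₁ *ᵥ (B *ᵥ c i)) = 0 := by
      intro i
      rw [← hconj q₁ hq₁symm i, ← hcol]
      exact hUd i
    have hsum : ∑ i, (B *ᵥ c i) ⬝ᵥ (q₂ *ᵥ (B *ᵥ c i)) = 0 := by
      have h₁ : ∀ i, (B *ᵥ c i) ⬝ᵥ (q₂ *ᵥ (B *ᵥ c i)) = (Uᵀ * (B * q₂ * B) * U) i i :=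
        fun i => by rw [hcol, hconj q₂ hq₂symm i]
      calc ∑ i, (B *ᵥ c i) ⬝ᵥ (q₂ *ᵥ (B *ᵥ c i))
          = ∑ i, (Uᵀ * (B * q₂ * B) * U) i i := Finset.sum_congr rfl fun i _ => h₁ i
        _ = (Uᵀ * (B * q₂ * B) * U).trace := rfl
        _ = (B * q₂ * B).trace := by
            rw [Matrix.trace_mul_comm, ← Matrix.mul_assoc, hUU', Matrix.one_mul]
        _ = 0 := htr₂
    have hterm : ∀ i, 0 ≤ (B *ᵥ c i) ⬝ᵥ (q₂ *ᵥ (B *ᵥ c i)) := by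
      intro i
      by_cases hBc : B *ᵥ c i = 0
      · rw [hBc]
        simp
      · exact le_of_lt (himp _ hBc (le_of_eq (hz i).symm))
    have hBc0 : ∀ i, B *ᵥ c i = 0 := by
      intro i
      by_contra hne
      have hzero := (Finset.sum_eq_zero_iff_of_nonneg (fun i _ => hterm i)).mp hsum i
        (Finset.mem_univ i)
      exact absurd hzero (ne_of_gt (himp _ hne (le_of_eq (hz i).symm)))
    have hBU : B * U = 0 := by
      ext k i
      have := congrFun (hBc0 i) k
      simpa [Matrix.mulVec, dotProduct, Matrix.mul_apply, hc] using this
    have hB0 : B = 0 := by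
      calc B = B * (U * Uᵀ) := by rw [hUU', Matrix.mul_one]
        _ = (B * U) * Uᵀ := by rw [Matrix.mul_assoc]
        _ = 0 := by rw [hBU, Matrix.zero_mul]
    exact hpne (by rw [← hBB, hB0, Matrix.mul_zero])
  tfae_finish
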